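/- Spreading representation of Kohn–Nirenberg operators: Let G be a second-countable metrizable LCA group. Let F ∈ L¹(Ĝ×G) and define the symbol σ on G×Ĝ by σ(x,ξ) = ∫_{Ĝ×G} F(ω,u) ⟨ω,x⟩⟨ξ,u⟩ dω du. Then for every f ∈ L¹(G) with f̂ ∈ L¹(Ĝ), the Kohn–Nirenberg operator satisfies K_σ f(x) = ∫_{Ĝ×G} F(ω,u) (M_ω T_{−u} f)(x) dω du for almost every x ∈ G. -/

import Mathlib

/- Common definitions: time-frequency analysis on locally compact abelian groups,
   following Gröchenig–Strohmer, "Pseudodifferential operators on locally compact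
   abelian groups and Sjöstrand's symbol class". -/

noncomputable section

open MeasureTheory Complex Filter Topology ENNReal ComplexConjugate

namespace GSjo

/-- `p : H → G → ℂ` is a perfect duality pairing identifying the LCA group `H`
with the Pontryagin dual of the LCA group `G`. -/
structure IsDualPairing {G H : Type*} [AddCommGroup G] [TopologicalSpace G]
    [AddCommGroup H] [TopologicalSpace H] (p : H → G → ℂ) : Prop where
  continuous : Continuous fun q : H × G => p q.1 q.2
  norm_one : ∀ ξ x, ‖p ξ x‖ = 1
  add_left : ∀ ξ η x, p (ξ + η) x = p ξ x * p η x
  add_right : ∀ ξ x y, p ξ (x + y) = p ξ x * p ξ y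
  sep_left : ∀ ξ : H, ξ ≠ 0 → ∃ x, p ξ x ≠ 1
  sep_right : ∀ x : G, x ≠ 0 → ∃ ξ, p ξ x ≠ 1
  full : ∀ χ : G → ℂ, Continuous χ → (∀ x, ‖χ x‖ = 1) →
    (∀ x y, χ (x + y) = χ x * χ y) → ∃ ξ, ∀ x, χ x = p ξ x

variable {G H : Type*}

/-- The Fourier transform on `G` with respect to the Haar measure `μ` and the pairing `p`. -/
def ft [MeasurableSpace G] (μ : Measure G) (p : H → G → ℂ) (f : G → ℂ) (ξ : H) : ℂ :=
  ∫ x, f x * conj (p ξ x) ∂μ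

/-- `ν` is the dual Haar measure: Fourier inversion holds. -/
def FourierInversion [MeasurableSpace G] [MeasurableSpace H]
    (μ : Measure G) (ν : Measure H) (p : H → G → ℂ) : Prop :=
  ∀ f : G → ℂ, Integrable f μ → Integrable (ft μ p f) ν →
    ∀ᵐ x ∂μ, f x = ∫ ξ, ft μ p f ξ * p ξ x ∂ν

/-- The time-frequency shift `π(z) g = M_{z.2} T_{z.1} g`. -/
def tfshift [AddGroup G] (p : H → G → ℂ) (z : G × H) (g : G → ℂ) : G → ℂ :=
  fun t => p z.2 t * g (t - z.1)

/-- The short-time Fourier transform `V_φ f (z) = ⟨f, π(z) φ⟩`. -/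
def stft [AddGroup G] [MeasurableSpace G] (μ : Measure G) (p : H → G → ℂ)
    (φ : G → ℂ) (f : G → ℂ) (z : G × H) : ℂ :=
  ∫ t, f t * conj (tfshift p z φ t) ∂μ

/-- The Kohn–Nirenberg pseudodifferential operator `K_σ`. -/
def knOp [MeasurableSpace G] [MeasurableSpace H] (μ : Measure G) (ν : Measure H)
    (p : H → G → ℂ) (σ : G × H → ℂ) (f : G → ℂ) (x : G) : ℂ :=
  ∫ ξ, σ (x, ξ) * ft μ p f ξ * p ξ x ∂ν

/-- The Kohn–Nirenberg operator applied to a function with prescribed Fourier transform `fh`. -/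
def knOpF [MeasurableSpace H] (ν : Measure H) (p : H → G → ℂ)
    (σ : G × H → ℂ) (fh : H → ℂ) (x : G) : ℂ :=
  ∫ ξ, σ (x, ξ) * fh ξ * p ξ x ∂ν

/-- The pairing between the phase space `G×Ĝ` and its dual group `Ĝ×G`. -/
def phasePair (p : H → G → ℂ) : H × G → G × H → ℂ :=
  fun ω z => p ω.1 z.1 * p z.2 ω.2

/-- The operator with spreading function `F`:  `∫ F(ω,u) M_ω T_{-u} f dω du`. -/
def spreadOp [AddGroup G] [MeasurableSpace G] [MeasurableSpace H]
    (μ : Measure G) (ν : Measure H) (p : H → G → ℂ)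
    (F : H × G → ℂ) (f : G → ℂ) (x : G) : ℂ :=
  ∫ w : H × G, F w * p w.1 x * f (x + w.2) ∂(ν.prod μ)

/-- The symbol whose spreading function is `F`. -/
def symbolOfSpread [MeasurableSpace G] [MeasurableSpace H]
    (μ : Measure G) (ν : Measure H) (p : H → G → ℂ)
    (F : H × G → ℂ) : G × H → ℂ :=
  fun z => ∫ w : H × G, F w * p w.1 z.1 * p z.2 w.2 ∂(ν.prod μ)

/-- The twisted convolution of two spreading functions on `Ĝ×G`. -/
def twistedConv [AddGroup G] [AddGroup H] [MeasurableSpace G] [MeasurableSpace H]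
    (μ : Measure G) (ν : Measure H) (p : H → G → ℂ)
    (F F' : H × G → ℂ) : H × G → ℂ :=
  fun w => ∫ w' : H × G, F w' * F' (w.1 - w'.1, w.2 - w'.2) * p (w.1 - w'.1) w'.2 ∂(ν.prod μ)

/-- The (cross) Rihaczek distribution `R(f,g)(x,ξ) = f(x) conj(ĝ(ξ)) conj⟨ξ,x⟩`,
with the Fourier transform `ĝ` passed explicitly as `gh`. -/
def rihaczek (p : H → G → ℂ) (f : G → ℂ) (gh : H → ℂ) : G × H → ℂ :=
  fun z => f z.1 * conj (gh z.2) * conj (p z.2 z.1)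

/-- `fh` is the Fourier–Plancherel transform of `f ∈ L²(G)`. -/
def IsPlancherelFT [MeasurableSpace G] [MeasurableSpace H]
    (μ : Measure G) (ν : Measure H) (p : H → G → ℂ)
    (f : G → ℂ) (fh : H → ℂ) : Prop :=
  MemLp f 2 μ ∧ MemLp fh 2 ν ∧
    ∀ φ : G → ℂ, Integrable φ μ → MemLp φ 2 μ →
      ∫ x, f x * conj (φ x) ∂μ = ∫ ξ, fh ξ * conj (ft μ p φ ξ) ∂ν

/-- An admissible weight on a product group `A × B` (e.g. on the phase space `G×Ĝ`):
continuous, nonnegative, normalized, even in each coordinate, submultiplicative and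
satisfying the GRS condition. -/
structure AdmissibleWeight {A B : Type*} [AddCommGroup A] [AddCommGroup B]
    [TopologicalSpace A] [TopologicalSpace B] (v : A × B → ℝ) : Prop where
  nonneg : ∀ z, 0 ≤ v z
  continuous : Continuous v
  norm_zero : v 0 = 1
  even_left : ∀ x y, v (-x, y) = v (x, y)
  even_right : ∀ x y, v (x, -y) = v (x, y)
  submul : ∀ z w, v (z + w) ≤ v z * v w
  grs : ∀ z, Tendsto (fun n : ℕ => (v (n • z)) ^ ((1 : ℝ) / n)) atTop (nhds 1)

/-- An admissible weight on a discrete group `D`. -/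
structure AdmissibleWeightD {D : Type*} [AddCommGroup D] (v : D → ℝ) : Prop where
  nonneg : ∀ x, 0 ≤ v x
  norm_zero : v 0 = 1
  even : ∀ x, v (-x) = v x
  submul : ∀ x y, v (x + y) ≤ v x * v y
  grs : ∀ x, Tendsto (fun n : ℕ => (v (n • x)) ^ ((1 : ℝ) / n)) atTop (nhds 1)

/-- `m` is a `v`-moderate weight. -/
def Moderate {P : Type*} [AddCommGroup P] (v m : P → ℝ) : Prop :=
  (∀ z, 0 ≤ m z) ∧ ∃ C > 0, ∀ z w, m (z + w) ≤ C * v w * m z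

/-- Bounded measurable function (enough to define all the STFT integrals below). -/
def BddM {X : Type*} [MeasurableSpace X] (σ : X → ℂ) : Prop :=
  Measurable σ ∧ ∃ C, ∀ z, ‖σ z‖ ≤ C

/-- The norm of the generalized Sjöstrand class `M^{∞,1}_{v∘J⁻¹}(G×Ĝ)` with window `Φ`:
`∫_{Ĝ×G} sup_z |V_Φ σ(z,ω)| v(J⁻¹ ω) dω`, where `J⁻¹(ω₁,u) = (u,-ω₁)`. -/
def sjoNorm [AddCommGroup G] [AddCommGroup H] [MeasurableSpace G] [MeasurableSpace H]
    (μ : Measure G) (ν : Measure H) (p : H → G → ℂ) (Φ : G × H → ℂ)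
    (v : G × H → ℝ) (σ : G × H → ℂ) : ℝ≥0∞ :=
  ∫⁻ ω : H × G, (⨆ z : G × H, (‖stft (μ.prod ν) (phasePair p) Φ σ (z, ω)‖₊ : ℝ≥0∞)) *
    ENNReal.ofReal (v (ω.2, -ω.1)) ∂(ν.prod μ)

/-- The norm of the modulation space `M¹_v(G)` with window `φ`. -/
def m1Norm [AddCommGroup G] [MeasurableSpace G] [MeasurableSpace H]
    (μ : Measure G) (ν : Measure H) (p : H → G → ℂ) (φ : G → ℂ)
    (v : G × H → ℝ) (g : G → ℂ) : ℝ≥0∞ :=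
  ∫⁻ z : G × H, (‖stft μ p φ g z‖₊ : ℝ≥0∞) * ENNReal.ofReal (v z) ∂(μ.prod ν)

/-- `L^p`-norm (`p ∈ [1,∞]`) of an `ℝ≥0∞`-valued function. -/
def lpNormE {X : Type*} [MeasurableSpace X] (μ : Measure X) (p : ℝ≥0∞)
    (f : X → ℝ≥0∞) : ℝ≥0∞ :=
  if p = ∞ then essSup f μ else (∫⁻ x, f x ^ p.toReal ∂μ) ^ ((1 : ℝ) / p.toReal)

/-- Mixed `L^{p,q}`-norm on a product measure space. -/
def mixedNorm {X Y : Type*} [MeasurableSpace X] [MeasurableSpace Y]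
    (μ : Measure X) (ν : Measure Y) (p q : ℝ≥0∞) (F : X × Y → ℝ≥0∞) : ℝ≥0∞ :=
  lpNormE ν q (fun y => lpNormE μ p (fun x => F (x, y)))

/-- The norm of the modulation space `M^{p,q}_m(G)` with window `φ`. -/
def modNorm [AddCommGroup G] [MeasurableSpace G] [MeasurableSpace H]
    (μ : Measure G) (ν : Measure H) (p : H → G → ℂ) (φ : G → ℂ)
    (pp qq : ℝ≥0∞) (m : G × H → ℝ) (f : G → ℂ) : ℝ≥0∞ :=
  mixedNorm μ ν pp qq (fun z => (‖stft μ p φ f z‖₊ : ℝ≥0∞) * ENNReal.ofReal (m z))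

/-- `T` is the bounded operator on `L²(G)` represented by the Kohn–Nirenberg
operator with symbol `σ`. -/
def RepresentsL2 [AddCommGroup G] [TopologicalSpace G] [MeasurableSpace G] [MeasurableSpace H]
    (μ : Measure G) (ν : Measure H) (p : H → G → ℂ) (σ : G × H → ℂ)
    (T : Lp ℂ 2 μ →L[ℂ] Lp ℂ 2 μ) : Prop :=
  ∀ f : G → ℂ, Integrable f μ → ∀ hf : MemLp f 2 μ, Integrable (ft μ p f) ν →
    (T (hf.toLp f) : G → ℂ) =ᵐ[μ] knOp μ ν p σ f

/-- The weak matrix coefficient `⟨K_σ π(z)g, π(y)g⟩` of a pseudodifferential operator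
with respect to the Gabor system generated by `g`. -/
def gaborEntry [AddGroup G] [MeasurableSpace G] [MeasurableSpace H]
    (μ : Measure G) (ν : Measure H) (p : H → G → ℂ)
    (σ : G × H → ℂ) (g : G → ℂ) (z y : G × H) : ℂ :=
  ∫ w : G × H, σ w * ft μ p (tfshift p z g) w.2 * p w.2 w.1 *
    conj (tfshift p y g w.1) ∂(μ.prod ν)

/-- The norm of the (weighted) nonstationary Wiener algebra `C_v(D)` of matrices. -/
def cvNorm {D : Type*} [AddCommGroup D] (v : D → ℝ) (A : D → D → ℂ) : ℝ≥0∞ :=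
  ∑' j : D, (⨆ i : D, (‖A i (i - j)‖₊ : ℝ≥0∞)) * ENNReal.ofReal (v j)

/-- `T` is the bounded operator on `ℓ²(D)` with matrix `A`. -/
def MatRepr {D : Type*} [AddCommGroup D] (A : D → D → ℂ)
    (T : lp (fun _ : D => ℂ) 2 →L[ℂ] lp (fun _ : D => ℂ) 2) : Prop :=
  ∀ c : lp (fun _ : D => ℂ) 2, ∀ i : D, T c i = ∑' j : D, A i j * c j

/- ### The concrete structure-theorem setting `G ≅ ℝ^d × G₀` -/

/-- The Gaussian window on `ℝ^d`. -/
def gaussW (d : ℕ) (x : Fin d → ℝ) : ℂ := Complex.exp (-(Real.pi : ℂ) * ∑ i, (x i : ℂ) ^ 2)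

/-- The annihilator `K⊥` of the compact open subgroup `K`. -/
def Kperp {G₀ H₀ : Type*} (p₀ : H₀ → G₀ → ℂ) (K : Set G₀) : Set H₀ :=
  {ξ | ∀ k ∈ K, p₀ ξ k = 1}

/-- The test window `φ = (Gaussian) ⊗ χ_K` on `G = ℝ^d × G₀`. -/
def winG {G₀ : Type*} (d : ℕ) (K : Set G₀) : (Fin d → ℝ) × G₀ → ℂ :=
  fun x => gaussW d x.1 * Set.indicator K (fun _ => (1 : ℂ)) x.2

/-- The test window `Φ = (Gaussian) ⊗ χ_{K×K⊥}` on the phase space `G×Ĝ`. -/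
def winP {G₀ H₀ : Type*} (d : ℕ) (p₀ : H₀ → G₀ → ℂ) (K : Set G₀) :
    ((Fin d → ℝ) × G₀) × ((Fin d → ℝ) × H₀) → ℂ :=
  fun z => gaussW d z.1.1 * gaussW d z.2.1 *
    Set.indicator K (fun _ => (1 : ℂ)) z.1.2 *
    Set.indicator (Kperp p₀ K) (fun _ => (1 : ℂ)) z.2.2

/-- The standard character pairing on `ℝ^d`. -/
def eRd (d : ℕ) (ξ x : Fin d → ℝ) : ℂ :=
  Complex.exp (2 * (Real.pi : ℂ) * Complex.I * (∑ i, (ξ i : ℂ) * (x i : ℂ)))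

/-- The duality pairing of `Ĝ = ℝ^d × Ĝ₀` with `G = ℝ^d × G₀`. -/
def pairG {G₀ H₀ : Type*} (d : ℕ) (p₀ : H₀ → G₀ → ℂ) :
    (Fin d → ℝ) × H₀ → (Fin d → ℝ) × G₀ → ℂ :=
  fun ξ x => eRd d ξ.1 x.1 * p₀ ξ.2 x.2


/-- **Spreading representation of Kohn–Nirenberg operators.**  If `F ∈ L¹(Ĝ×G)` and
`σ(x,ξ) = ∫ F(ω,u) ⟨ω,x⟩⟨ξ,u⟩ dω du`, then for every `f ∈ L¹(G)` with `f̂ ∈ L¹(Ĝ)`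
one has `K_σ f = ∫ F(ω,u) M_ω T_{−u} f dω du` almost everywhere. -/
theorem spreading_representation
    {G : Type*} [AddCommGroup G] [TopologicalSpace G] [IsTopologicalAddGroup G]
    [LocallyCompactSpace G] [SecondCountableTopology G] [TopologicalSpace.MetrizableSpace G]
    [MeasurableSpace G] [BorelSpace G]
    {H : Type*} [AddCommGroup H] [TopologicalSpace H] [IsTopologicalAddGroup H]
    [LocallyCompactSpace H] [SecondCountableTopology H] [TopologicalSpace.MetrizableSpace H]
    [MeasurableSpace H] [BorelSpace H]
    (μ : Measure G) (ν : Measure H) [μ.IsAddHaarMeasure] [ν.IsAddHaarMeasure]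
    (p : H → G → ℂ) (hp : IsDualPairing p) (hFI : FourierInversion μ ν p)
    (F : H × G → ℂ) (hF : Integrable F (ν.prod μ))
    (f : G → ℂ) (hf : Integrable f μ) (hfhat : Integrable (ft μ p f) ν) :
    knOp μ ν p (symbolOfSpread μ ν p F) f =ᵐ[μ] spreadOp μ ν p F f := by
  classical
  set fh : H → ℂ := ft μ p f with hfh
  set g : G → ℂ := fun y => ∫ ξ, fh ξ * p ξ y ∂ν with hgdef
  have hinv : ∀ᵐ y ∂μ, f y = g y := hFI f hf hfhat
  obtain ⟨S, hSsub, hSmeas, hSnull⟩ :=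
    exists_measurable_superset_of_null (ae_iff.mp hinv)
  -- the bad set in the product space is null
  have hEmeas : MeasurableSet {z : G × (H × G) | z.1 + z.2.2 ∈ S} :=
    (continuous_fst.add (continuous_snd.snd)).measurable hSmeas
  have hEnull : (μ.prod ((ν.prod μ))) {z : G × (H × G) | z.1 + z.2.2 ∈ S} = 0 := by
    rw [Measure.prod_apply_symm hEmeas]
    have : ∀ w : H × G, μ ((fun x => (x, w)) ⁻¹' {z : G × (H × G) | z.1 + z.2.2 ∈ S}) = 0 := by
      intro w
      have hset : ((fun x => (x, w)) ⁻¹' {z : G × (H × G) | z.1 + z.2.2 ∈ S})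
          = (fun x => w.2 + x) ⁻¹' S := by
        ext x; simp [Set.mem_preimage, add_comm]
      rw [hset, measure_preimage_add μ w.2 S, hSnull]
    simp only [this, lintegral_zero]
  have hgood : ∀ᵐ x ∂μ, ∀ᵐ w ∂(ν.prod μ), ¬ (x + w.2 ∈ S) := by
    have := measure_eq_zero_iff_ae_notMem.mp hEnull
    exact Measure.ae_ae_of_ae_prod this
  filter_upwards [hgood] with x hx
  -- rewrite the symbol integral and swap
  have hpmeas := hp.continuous
  have key : Integrable (Function.uncurry fun (ξ : H) (w : H × G) =>
      (F w * p w.1 x * p ξ w.2) * (fh ξ * p ξ x)) (ν.prod (ν.prod μ)) := by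
    have hdom : Integrable (fun z : H × (H × G) => ‖fh z.1‖ * ‖F z.2‖) (ν.prod (ν.prod μ)) :=
      hfhat.norm.mul_prod hF.norm
    have hmeas : AEStronglyMeasurable (Function.uncurry fun (ξ : H) (w : H × G) =>
        (F w * p w.1 x * p ξ w.2) * (fh ξ * p ξ x)) (ν.prod (ν.prod μ)) := by
      have h1 : AEStronglyMeasurable (fun z : H × (H × G) => F z.2) (ν.prod (ν.prod μ)) :=
        hF.aestronglyMeasurable.comp_snd
      have h2 : AEStronglyMeasurable (fun z : H × (H × G) => fh z.1) (ν.prod (ν.prod μ)) :=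
        hfhat.aestronglyMeasurable.comp_fst
      have h3 : Continuous (fun z : H × (H × G) => p z.2.1 x) :=
        hpmeas.comp ((continuous_snd.fst).prodMk continuous_const)
      have h4 : Continuous (fun z : H × (H × G) => p z.1 z.2.2) :=
        hpmeas.comp (continuous_fst.prodMk continuous_snd.snd)
      have h5 : Continuous (fun z : H × (H × G) => p z.1 x) :=
        hpmeas.comp (continuous_fst.prodMk continuous_const)
      exact ((h1.mul h3.aestronglyMeasurable).mul h4.aestronglyMeasurable).mul
        (h2.mul h5.aestronglyMeasurable)
    refine hdom.mono' hmeas ?_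
    filter_upwards with z
    simp only [Function.uncurry, norm_mul, hp.norm_one, mul_one]
    exact le_of_eq (mul_comm _ _)
  calc knOp μ ν p (symbolOfSpread μ ν p F) f x
      = ∫ ξ, ∫ w : H × G, (F w * p w.1 x * p ξ w.2) * (fh ξ * p ξ x)
          ∂(ν.prod μ) ∂ν := by
        unfold knOp symbolOfSpread
        refine integral_congr_ae (Filter.Eventually.of_forall fun ξ => ?_)
        show (∫ w : H × G, F w * p w.1 x * p ξ w.2 ∂(ν.prod μ)) * fh ξ * p ξ x
            = ∫ w : H × G, F w * p w.1 x * p ξ w.2 * (fh ξ * p ξ x) ∂(ν.prod μ)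
        rw [mul_assoc, ← integral_mul_const]
    _ = ∫ w : H × G, ∫ ξ, (F w * p w.1 x * p ξ w.2) * (fh ξ * p ξ x) ∂ν
          ∂(ν.prod μ) := integral_integral_swap key
    _ = ∫ w : H × G, F w * p w.1 x * g (x + w.2) ∂(ν.prod μ) := by
        refine integral_congr_ae (Filter.Eventually.of_forall fun w => ?_)
        have : ∀ ξ, (F w * p w.1 x * p ξ w.2) * (fh ξ * p ξ x)
            = (F w * p w.1 x) * (fh ξ * p ξ (x + w.2)) := by
          intro ξ; rw [hp.add_right]; ring
        simp_rw [this, integral_const_mul]; rfl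
    _ = ∫ w : H × G, F w * p w.1 x * f (x + w.2) ∂(ν.prod μ) := by
        refine integral_congr_ae ?_
        filter_upwards [hx] with w hw
        have : f (x + w.2) = g (x + w.2) := by
          by_contra hne
          exact hw (hSsub hne)
        rw [this]
    _ = spreadOp μ ν p F f x := rfl
end GSjo
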